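/- Among the polynomials t^n - Σ_{i∈M} t^i with 0 ∈ M ⊆ { j : j ≤ (n-1)/2 } of fixed degree n ≥ 1, the polynomial t^n - Σ_{i=0}^{⌊(n-1)/2⌋} t^i has the largest positive root. -/
import Mathlib


/-- `u ^ n` for lists: concatenation of `n` copies of `u`. -/
def listPow {X : Type*} (u : List X) : ℕ → List X
  | 0 => []
  | n+1 => u ++ listPow u n

/-- `P_q = { v : e ⊏ v ⊑ q ⊏ v·q }`. -/
def Pq {X : Type*} (q : List X) : Set (List X) :=
  {v | v ≠ [] ∧ v <+: q ∧ q <+: v ++ q}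

/-- membership in the submonoid `P^*` generated by `P`. -/
def InStar {X : Type*} (P : Set (List X)) (w : List X) : Prop :=
  ∃ l : List (List X), (∀ v ∈ l, v ∈ P) ∧ w = l.flatten

/-- A finite word `w` is quasiperiodic with quasiperiod `q`. -/
def QuasiPeriodic {X : Type*} (q w : List X) : Prop :=
  ∀ j < w.length, ∃ u : List X, u.length ≤ j ∧ j < u.length + q.length ∧ (u ++ q) <+: w

/-- `Q_q`: the set of finite words quasiperiodic with quasiperiod `q`. -/
def Qq {X : Type*} (q : List X) : Set (List X) := {w | QuasiPeriodic q w}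

/-- `u` is a (finite) prefix of the infinite word `ξ`. -/
def InfPrefix {X : Type*} (ξ : ℕ → X) (u : List X) : Prop :=
  u = (List.range u.length).map ξ

/-- An infinite word `ξ` is quasiperiodic with quasiperiod `q`. -/
def QuasiPeriodicInf {X : Type*} (q : List X) (ξ : ℕ → X) : Prop :=
  ∀ j : ℕ, ∃ u : List X, u.length ≤ j ∧ j < u.length + q.length ∧ InfPrefix ξ (u ++ q)

/-- the star root `P \ (P²·P*)`. -/
def StarRoot {X : Type*} (P : Set (List X)) : Set (List X) :=
  {v | v ∈ P ∧ ¬ ∃ (a b : List X) (l : List (List X)),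
    a ∈ P ∧ b ∈ P ∧ (∀ x ∈ l, x ∈ P) ∧ v = a ++ b ++ l.flatten}

/-- `ξ ∈ P^ω`: infinite concatenation of nonempty words of `P`. -/
def InOmega {X : Type*} (P : Set (List X)) (ξ : ℕ → X) : Prop :=
  ∃ f : ℕ → List X, (∀ i, f i ∈ P ∧ f i ≠ []) ∧
    ∀ n, InfPrefix ξ ((List.range n).map f).flatten

/-- Among the polynomials `t^n - ∑_{i ∈ M} t^i` with `0 ∈ M ⊆ {j : j ≤ (n-1)/2}` of
fixed degree `n`, the one with full `M` has the largest positive root. -/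
theorem stmt16 (n : ℕ) (hn : 1 ≤ n) (M : Finset ℕ) (h0 : 0 ∈ M)
    (hM : ∀ j ∈ M, 2 * j ≤ n - 1)
    (r s : ℝ) (hr : 0 < r) (hroot : r ^ n - ∑ i ∈ M, r ^ i = 0)
    (hs : 0 < s) (hsroot : s ^ n - ∑ i ∈ Finset.range ((n - 1) / 2 + 1), s ^ i = 0) :
    r ≤ s := by
  by_contra h
  push_neg at h
  set K := (n - 1) / 2 + 1 with hK
  have hMsub : M ⊆ Finset.range K := fun j hj =>
    Finset.mem_range.mpr (by have := hM j hj; omega)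
  have h1 : r ^ n ≤ ∑ i ∈ Finset.range K, r ^ i := by
    have he : r ^ n = ∑ i ∈ M, r ^ i := by linarith
    rw [he]
    exact Finset.sum_le_sum_of_subset_of_nonneg hMsub (fun i _ _ => by positivity)
  have h2 : (∑ i ∈ Finset.range K, s ^ i) = s ^ n := by linarith
  have hstrict : ∑ i ∈ Finset.range K, r ^ i * s ^ n <
      ∑ i ∈ Finset.range K, s ^ i * r ^ n := by
    apply Finset.sum_lt_sum_of_nonempty ⟨0, Finset.mem_range.mpr (Nat.succ_pos _)⟩
    intro i hi
    have hin : i < n := by have := Finset.mem_range.mp hi; omega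
    have hlt : s ^ (n - i) < r ^ (n - i) :=
      pow_lt_pow_left₀ h (le_of_lt hs) (by omega)
    have hr' : r ^ n = r ^ i * r ^ (n - i) := by rw [← pow_add]; congr 1; omega
    have hs' : s ^ n = s ^ i * s ^ (n - i) := by rw [← pow_add]; congr 1; omega
    rw [hr', hs']
    have hkey := mul_lt_mul_of_pos_left hlt
      (by positivity : (0:ℝ) < r ^ i * s ^ i)
    nlinarith [hkey]
  rw [← Finset.sum_mul, ← Finset.sum_mul, h2] at hstrict
  nlinarith [pow_pos hs n, pow_pos hr n]
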